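/- Let R be a Noetherian ring of prime characteristic p, and let c, c' ∈ R with c' dividing c. Then the purity exponent of c' is at most the purity exponent of c: 𝔢_{c'} ≤ 𝔢_c. In particular, if 𝔢_c < ∞ for some nonzero c, then R is F-pure (hence reduced) and c is a nonzerodivisor. -/

import Mathlib

/-!
STATEMENT 14.  `R` Noetherian of prime characteristic `p`, `c' ∣ c`.
Then `𝔢_{c'} ≤ 𝔢_c`; and if `c ≠ 0` has finite purity exponent, then `R` is
F-pure (i.e. `𝔢_1 = 0`), hence reduced, and `c` is a nonzerodivisor.
-/

open scoped TensorProduct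

universe u

/-- `FrobTwist R p e` is `R` viewed as an `R`-module via the `e`-th iterate of
the Frobenius endomorphism (the paper's `ᵉR`). -/
def FrobTwist (R : Type u) (p e : ℕ) : Type u := R

instance (R : Type u) [CommRing R] (p e : ℕ) : CommRing (FrobTwist R p e) :=
  inferInstanceAs (CommRing R)

noncomputable instance (R : Type u) [CommRing R] (p e : ℕ) [Fact p.Prime] [CharP R p] :
    Module R (FrobTwist R p e) :=
  Module.compHom R (iterateFrobenius R p e)

/-- The `R`-linear map `θ_{e,c} : R → ᵉR` with `1 ↦ ᵉc`. -/
noncomputable def thetaMap (R : Type u) [CommRing R] (p e : ℕ) [Fact p.Prime] [CharP R p]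
    (c : R) : R →ₗ[R] FrobTwist R p e where
  toFun r := (iterateFrobenius R p e r * c : R)
  map_add' a b := by
    show iterateFrobenius R p e (a + b) * c = iterateFrobenius R p e a * c + iterateFrobenius R p e b * c
    rw [map_add, add_mul]
  map_smul' r x := by
    show iterateFrobenius R p e (r * x) * c = iterateFrobenius R p e r * (iterateFrobenius R p e x * c)
    rw [map_mul, mul_assoc]

/-- A map of `R`-modules is pure if it stays injective after tensoring with
every `R`-module. -/
def IsPureMap {R : Type u} [CommRing R] {M N : Type u}
    [AddCommGroup M] [AddCommGroup N] [Module R M] [Module R N]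
    (f : M →ₗ[R] N) : Prop :=
  ∀ (V : Type u) [AddCommGroup V] [Module R V],
    Function.Injective (LinearMap.lTensor V f)

/-- The purity exponent `𝔢_c ∈ ℕ ∪ {∞}`: the least `e` such that `θ_{e',c}` is
pure for all `e' ≥ e` (and `∞` if there is no such `e`). -/
noncomputable def purityExponent (R : Type u) [CommRing R] (p : ℕ)
    [Fact p.Prime] [CharP R p] (c : R) : ℕ∞ :=
  sInf {n : ℕ∞ | ∃ e : ℕ, n = (e : ℕ∞) ∧
    ∀ e' : ℕ, e ≤ e' → IsPureMap (thetaMap R p e' c)}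


section Aux

variable {R : Type u} [CommRing R] (p : ℕ) [Fact p.Prime] [CharP R p]

lemma isPureMap_of_comp {M N P : Type u} [AddCommGroup M] [AddCommGroup N] [AddCommGroup P]
    [Module R M] [Module R N] [Module R P] (f : M →ₗ[R] N) (g : N →ₗ[R] P)
    (h : IsPureMap (g ∘ₗ f)) : IsPureMap f := by
  intro V _ _
  have hV := h V
  rw [LinearMap.lTensor_comp, LinearMap.coe_comp] at hV
  exact Function.Injective.of_comp hV

lemma isPureMap_injective {M N : Type u} [AddCommGroup M] [AddCommGroup N]
    [Module R M] [Module R N] {f : M →ₗ[R] N} (h : IsPureMap f) :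
    Function.Injective f := by
  intro a b hab
  have hV := h R
  have h2 : (LinearMap.lTensor R f) ((1 : R) ⊗ₜ a) = (LinearMap.lTensor R f) ((1 : R) ⊗ₜ b) := by
    simp only [LinearMap.lTensor_tmul, hab]
  have h3 := hV h2
  have h4 := congrArg (TensorProduct.lid R M) h3
  simpa using h4

/-- Multiplication by `d` on the Frobenius twist, as an `R`-linear map. -/
noncomputable def frobMulRight (e : ℕ) (d : R) :
    FrobTwist R p e →ₗ[R] FrobTwist R p e where
  toFun x := ((show R from x) * d : R)
  map_add' a b :=
    show ((show R from a) + (show R from b)) * d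
        = (show R from a) * d + (show R from b) * d from add_mul _ _ _
  map_smul' r x :=
    show (iterateFrobenius R p e r * (show R from x)) * d
        = iterateFrobenius R p e r * ((show R from x) * d) from mul_assoc _ _ _

/-- The `R`-linear shift `ᵉR → ᴱR`, `x ↦ F^{E-e}(x)`, for `e ≤ E`. -/
noncomputable def frobShift (e E : ℕ) (h : e ≤ E) :
    FrobTwist R p e →ₗ[R] FrobTwist R p E where
  toFun x := (iterateFrobenius R p (E - e) (show R from x) : R)
  map_add' a b :=
    show iterateFrobenius R p (E - e) ((show R from a) + (show R from b))
        = iterateFrobenius R p (E - e) (show R from a)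
          + iterateFrobenius R p (E - e) (show R from b) from map_add _ _ _
  map_smul' r x := by
    show iterateFrobenius R p (E - e) (iterateFrobenius R p e r * (show R from x))
        = iterateFrobenius R p E r * iterateFrobenius R p (E - e) (show R from x)
    rw [map_mul, ← iterateFrobenius_add_apply, Nat.sub_add_cancel h]

lemma theta_factor_dvd (e : ℕ) {c c' : R} (hdvd : c' ∣ c) :
    ∃ g : FrobTwist R p e →ₗ[R] FrobTwist R p e,
      thetaMap R p e c = g ∘ₗ thetaMap R p e c' := by
  obtain ⟨d, rfl⟩ := hdvd
  refine ⟨frobMulRight p e d, LinearMap.ext fun r => ?_⟩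
  show iterateFrobenius R p e r * (c' * d) = (iterateFrobenius R p e r * c') * d
  ring

lemma theta_one_factor {e E : ℕ} (h : e ≤ E) :
    thetaMap R p E (1 : R) = frobShift p e E h ∘ₗ thetaMap R p e (1 : R) := by
  refine LinearMap.ext fun r => ?_
  show iterateFrobenius R p E r * 1
      = iterateFrobenius R p (E - e) (iterateFrobenius R p e r * 1)
  rw [mul_one, mul_one, ← iterateFrobenius_add_apply, Nat.sub_add_cancel h]

lemma isPureMap_theta_of_dvd (e : ℕ) {c c' : R} (hdvd : c' ∣ c)
    (h : IsPureMap (thetaMap R p e c)) : IsPureMap (thetaMap R p e c') := by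
  obtain ⟨g, hg⟩ := theta_factor_dvd p e hdvd
  exact isPureMap_of_comp _ g (hg ▸ h)

lemma isPureMap_theta_one_of_le {e E : ℕ} (h : e ≤ E)
    (hE : IsPureMap (thetaMap R p E (1 : R))) : IsPureMap (thetaMap R p e (1 : R)) :=
  isPureMap_of_comp _ (frobShift p e E h) (theta_one_factor (R := R) p h ▸ hE)

end Aux

theorem purityExponent_le_of_dvd
    (R : Type u) [CommRing R] [IsNoetherianRing R]
    (p : ℕ) [Fact p.Prime] [CharP R p] (c c' : R) (hdvd : c' ∣ c) :
    purityExponent R p c' ≤ purityExponent R p c ∧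
      (c ≠ 0 → purityExponent R p c ≠ ⊤ →
        purityExponent R p (1 : R) = 0 ∧ IsReduced R ∧ c ∈ nonZeroDivisors R) := by
  have hp : p.Prime := Fact.out
  constructor
  · unfold purityExponent
    apply sInf_le_sInf
    rintro n ⟨e, rfl, h⟩
    exact ⟨e, rfl, fun e' he' => isPureMap_theta_of_dvd p e' hdvd (h e' he')⟩
  · intro hc htop
    have hne : {n : ℕ∞ | ∃ e : ℕ, n = (e : ℕ∞) ∧
        ∀ e' : ℕ, e ≤ e' → IsPureMap (thetaMap R p e' c)}.Nonempty := by
      by_contra h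
      rw [Set.not_nonempty_iff_eq_empty] at h
      apply htop
      unfold purityExponent
      rw [h, sInf_empty]
    obtain ⟨n, e0, rfl, hpure⟩ := hne
    have hone : ∀ e : ℕ, IsPureMap (thetaMap R p e (1 : R)) := fun e =>
      isPureMap_theta_one_of_le p (le_max_left e e0)
        (isPureMap_theta_of_dvd p _ (one_dvd c) (hpure _ (le_max_right e e0)))
    have h1 : purityExponent R p (1 : R) = 0 := by
      apply le_antisymm _ zero_le
      exact sInf_le ⟨0, rfl, fun e' _ => hone e'⟩
    refine ⟨h1, ⟨fun x hx => ?_⟩, ?_⟩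
    · obtain ⟨m, hm⟩ := hx
      have hinj := isPureMap_injective (hone m)
      have hth : thetaMap R p m (1 : R) x = thetaMap R p m (1 : R) 0 := by
        show iterateFrobenius R p m x * 1 = iterateFrobenius R p m 0 * 1
        rw [map_zero, zero_mul, mul_one, iterateFrobenius_def]
        exact pow_eq_zero_of_le (Nat.lt_pow_self (n := m) hp.one_lt).le hm
      exact hinj hth
    · rw [mem_nonZeroDivisors_iff_right]
      intro x hx
      have hinj := isPureMap_injective (hpure e0 le_rfl)
      have hth : thetaMap R p e0 c x = thetaMap R p e0 c 0 := by
        show iterateFrobenius R p e0 x * c = iterateFrobenius R p e0 0 * c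
        rw [map_zero, zero_mul, iterateFrobenius_def,
          ← Nat.sub_add_cancel (Nat.one_le_pow e0 p hp.pos), pow_succ, mul_assoc, hx, mul_zero]
      exact hinj hth
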